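/- Let X₀, X₁ be Banach spaces, m ∈ ℝ, N ∈ ℕ, τ > 0, let (φ_j)_{j≥0} be a dyadic partition of unity on ℝ^n, and let p ∈ C^τ S^m_{1,0}(ℝ^n × ℝ^n, N; 𝓛(X₀, X₁)). Set p_j(x,ξ) = p(x,ξ) φ_j(ξ) and k_j(x,z) = 𝓕⁻¹_{ξ→z}[p_j(x,ξ)]. Then for every multi-index α ∈ ℕ₀^n and every M ∈ {0, …, N} there is a constant C_{α,M} such that ‖∂_z^α k_j(x,z)‖_{𝓛(X₀,X₁)} ≤ C_{α,M} |z|^{−M} 2^{j(n + m + |α| − M)} uniformly in j ∈ ℕ₀, x ∈ ℝ^n and z ≠ 0. -/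

import Mathlib

open MeasureTheory Filter
open scoped Real ENNReal NNReal

noncomputable section

abbrev Vec (n : ℕ) : Type := EuclideanSpace ℝ (Fin n)

/-- Fourier transform of a vector-valued function. -/
def vFourier {n : ℕ} {X : Type*} [NormedAddCommGroup X] [NormedSpace ℂ X]
    (g : Vec n → X) (ξ : Vec n) : X :=
  ∫ x : Vec n, Complex.exp (-(Complex.I * ((inner ℝ x ξ : ℝ) : ℂ))) • g x

/-- Inverse Fourier transform of a vector-valued function. -/
def vFourierInv {n : ℕ} {X : Type*} [NormedAddCommGroup X] [NormedSpace ℂ X]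
    (g : Vec n → X) (x : Vec n) : X :=
  (((2 * Real.pi) ^ n : ℝ) : ℂ)⁻¹ •
    ∫ ξ : Vec n, Complex.exp (Complex.I * ((inner ℝ x ξ : ℝ) : ℂ)) • g ξ

/-- A dyadic (Littlewood–Paley) partition of unity on `ℝ^n`. -/
structure DyadicPartition (n : ℕ) where
  φ : ℕ → Vec n → ℝ
  smooth : ∀ j, ContDiff ℝ (⊤ : ℕ∞) (φ j)
  hasSum_one : ∀ ξ, HasSum (fun j => φ j ξ) 1
  even : ∀ j ξ, φ j (-ξ) = φ j ξ
  supp_zero : tsupport (φ 0) ⊆ Metric.closedBall 0 2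
  supp_succ : ∀ j : ℕ, 1 ≤ j →
    tsupport (φ j) ⊆ {ξ : Vec n | (2 : ℝ) ^ (j - 1) ≤ ‖ξ‖ ∧ ‖ξ‖ ≤ (2 : ℝ) ^ (j + 1)}
  deriv_bound : ∀ k : ℕ, ∃ C : ℝ, ∀ (j : ℕ) (ξ : Vec n),
    ‖iteratedFDeriv ℝ k (φ j) ξ‖ ≤ C * (((2 : ℝ) ^ j)⁻¹) ^ k

/-- `‖f‖_{C^τ} ≤ C` : all derivatives up to order `⌊τ⌋` bounded by `C` and the top
derivatives `(τ - ⌊τ⌋)`-Hölder continuous with constant `C`. -/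
def HolderBoundedBy {E F : Type*} [NormedAddCommGroup E] [NormedSpace ℝ E]
    [NormedAddCommGroup F] [NormedSpace ℝ F] (τ C : ℝ) (f : E → F) : Prop :=
  ContDiff ℝ (⌊τ⌋₊ : ℕ) f ∧
  (∀ k : ℕ, k ≤ ⌊τ⌋₊ → ∀ x, ‖iteratedFDeriv ℝ k f x‖ ≤ C) ∧
  (∀ x y : E, ‖iteratedFDeriv ℝ ⌊τ⌋₊ f x - iteratedFDeriv ℝ ⌊τ⌋₊ f y‖ ≤
    C * ‖x - y‖ ^ (τ - (⌊τ⌋₊ : ℝ)))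

/-- The nonsmooth symbol class `C^τ S^m_{1,0}(ℝ^n × ℝ^n, N; 𝓛(X₀, X₁))`. -/
def SymbolClass {n : ℕ} {X₀ X₁ : Type*} [NormedAddCommGroup X₀] [NormedSpace ℂ X₀]
    [NormedAddCommGroup X₁] [NormedSpace ℂ X₁]
    (τ m : ℝ) (N : ℕ) (p : Vec n → Vec n → (X₀ →L[ℂ] X₁)) : Prop :=
  (∀ x, ContDiff ℝ (N : ℕ) (fun ξ => p x ξ)) ∧
  ∀ a : ℕ, a ≤ N → ∃ C : ℝ, 0 ≤ C ∧ ∀ ξ : Vec n,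
    HolderBoundedBy τ (C * (1 + ‖ξ‖ ^ 2) ^ ((m - a) / 2))
      (fun x => iteratedFDeriv ℝ a (fun ζ => p x ζ) ξ)

/-- Littlewood–Paley projection `φ_i(D) g = 𝓕⁻¹φ_i * g`. -/
def lpProj {n : ℕ} (P : DyadicPartition n) (i : ℕ) {X : Type*} [NormedAddCommGroup X]
    [NormedSpace ℂ X] (g : Vec n → X) : Vec n → X :=
  fun x => ∫ y : Vec n, vFourierInv (fun ξ => ((P.φ i ξ : ℝ) : ℂ)) (x - y) • g y

/-- The pseudodifferential operator `p(x,D)` in oscillatory-integral form. -/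
def psiOp {n : ℕ} {X₀ X₁ : Type*} [NormedAddCommGroup X₀] [NormedSpace ℂ X₀]
    [NormedAddCommGroup X₁] [NormedSpace ℂ X₁]
    (p : Vec n → Vec n → (X₀ →L[ℂ] X₁)) (f : Vec n → X₀) : Vec n → X₁ :=
  fun x => (((2 * Real.pi) ^ n : ℝ) : ℂ)⁻¹ •
    ∫ ξ : Vec n, Complex.exp (Complex.I * ((inner ℝ x ξ : ℝ) : ℂ)) • (p x ξ) (vFourier f ξ)



section Helpers

variable {n : ℕ} {X : Type*} [NormedAddCommGroup X] [NormedSpace ℂ X]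

/-- Norm bound for iterated derivatives of a composition with a scalar dilation. -/
lemma norm_iteratedFDeriv_comp_smul_le {ν : ℕ∞} {f : Vec n → X} (hf : ContDiff ℝ (ν : ℕ∞) f)
    (c : ℝ) {i : ℕ} (hi : (i : ℕ∞) ≤ ν) (z : Vec n) :
    ‖iteratedFDeriv ℝ i (fun w => f (c • w)) z‖ ≤ |c| ^ i * ‖iteratedFDeriv ℝ i f (c • z)‖ := by
  set L : Vec n →L[ℝ] Vec n := c • ContinuousLinearMap.id ℝ (Vec n) with hL
  have hfun : (fun w => f (c • w)) = f ∘ L := by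
    funext w; simp [hL]
  have hLz : L z = c • z := by simp [hL]
  have hLnorm : ‖L‖ ≤ |c| := by
    refine ContinuousLinearMap.opNorm_le_bound _ (abs_nonneg c) (fun w => ?_)
    have : ‖L w‖ = |c| * ‖w‖ := by simp [hL, norm_smul, Real.norm_eq_abs]
    exact le_of_eq this
  rw [hfun, L.iteratedFDeriv_comp_right hf z (by exact_mod_cast hi)]
  calc ‖(iteratedFDeriv ℝ i f (L z)).compContinuousLinearMap fun _ => L‖
      ≤ ‖iteratedFDeriv ℝ i f (L z)‖ * ∏ _j : Fin i, ‖L‖ :=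
        ContinuousMultilinearMap.norm_compContinuousLinearMap_le _ _
    _ ≤ ‖iteratedFDeriv ℝ i f (L z)‖ * |c| ^ i := by
        have hp : (∏ _j : Fin i, ‖L‖) = ‖L‖ ^ i := by
          rw [Finset.prod_const, Finset.card_univ, Fintype.card_fin]
        rw [hp]
        exact mul_le_mul_of_nonneg_left (pow_le_pow_left₀ (norm_nonneg L) hLnorm i)
          (norm_nonneg _)
    _ = |c| ^ i * ‖iteratedFDeriv ℝ i f (c • z)‖ := by rw [hLz]; ring

/-- `vFourierInv` expressed through the standard Fourier integral of a dilated function. -/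
lemma vFourierInv_eq_fourierIntegral (g : Vec n → X) (A : ℝ) (hA : 0 < A) (z : Vec n) :
    vFourierInv g z =
      (A ^ n : ℝ) • FourierTransform.fourier (fun η => g ((-(2 * Real.pi * A)) • η)) (A • z) := by
  have hπ : (0 : ℝ) < 2 * Real.pi := by positivity
  set c : ℝ := -(2 * Real.pi * A) with hc
  have hcneg : c < 0 := by rw [hc]; nlinarith
  set F : Vec n → X := fun ξ => Complex.exp (Complex.I * ((inner ℝ z ξ : ℝ) : ℂ)) • g ξ with hF
  have key : ∀ η : Vec n,
      (Real.fourierChar (-(inner ℝ η (A • z) : ℝ)) : Circle) • g (c • η) = F (c • η) := by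
    intro η
    rw [Circle.smul_def, Real.fourierChar_apply, hF]
    simp only
    congr 1
    rw [real_inner_smul_right z, real_inner_smul_right η, real_inner_comm z η]
    push_cast
    exact congrArg Complex.exp (by simp only [hc]; push_cast; ring)
  have hFi : FourierTransform.fourier (fun η => g (c • η)) (A • z)
      = ((2 * Real.pi * A) ^ n)⁻¹ • ∫ ξ, F ξ := by
    rw [Real.fourier_eq]
    have : (fun η : Vec n => (Real.fourierChar (-(inner ℝ η (A • z) : ℝ)) : Circle) • g (c • η))
        = fun η => F (c • η) := funext key
    rw [this, MeasureTheory.Measure.integral_comp_smul volume F c, finrank_euclideanSpace_fin]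
    congr 1
    rw [abs_inv, abs_pow, abs_of_neg hcneg, hc]
    ring_nf
  rw [hFi, smul_smul]
  have hcoef : (A ^ n : ℝ) * ((2 * Real.pi * A) ^ n)⁻¹ = (((2 * Real.pi) ^ n : ℝ))⁻¹ := by
    rw [mul_pow]
    field_simp
  rw [hcoef]
  have : ((((2 * Real.pi) ^ n : ℝ)) : ℂ)⁻¹ = ((((2 * Real.pi) ^ n : ℝ)⁻¹ : ℝ) : ℂ) := by
    push_cast; ring
  rw [vFourierInv, this, Complex.coe_smul]

end Helpers

set_option maxHeartbeats 2000000 in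
set_option synthInstance.maxHeartbeats 400000 in
/-- Lemma A.2: kernel estimates for the dyadic pieces
`k_j(x,z) = 𝓕⁻¹_{ξ→z}[p(x,ξ)φ_j(ξ)]` of a symbol `p ∈ C^τ S^m_{1,0}(ℝ^n×ℝ^n, N; 𝓛(X₀,X₁))`:
`‖∂_z^α k_j(x,z)‖ ≤ C_{α,M} |z|^{-M} 2^{j(n+m+|α|-M)}` for all `M ∈ {0,…,N}`. -/
theorem statement4 {n : ℕ} (hn : 1 ≤ n)
    {X₀ X₁ : Type*} [NormedAddCommGroup X₀] [NormedSpace ℂ X₀] [CompleteSpace X₀]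
    [NormedAddCommGroup X₁] [NormedSpace ℂ X₁] [CompleteSpace X₁]
    (m τ : ℝ) (hτ : 0 < τ) (N : ℕ) (hN : 1 ≤ N)
    (P : DyadicPartition n)
    (p : Vec n → Vec n → (X₀ →L[ℂ] X₁)) (hp : SymbolClass τ m N p) :
    ∀ (a M : ℕ), M ≤ N → ∃ C : ℝ, 0 ≤ C ∧
      ∀ (j : ℕ) (x z : Vec n), z ≠ 0 →
        ‖iteratedFDeriv ℝ a
            (fun w : Vec n => vFourierInv (fun ξ => ((P.φ j ξ : ℝ) : ℂ) • p x ξ) w) z‖ ≤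
          C * ‖z‖ ^ (-(M : ℝ)) * (2 : ℝ) ^ ((j : ℝ) * ((n : ℝ) + m + (a : ℝ) - (M : ℝ))) := by
  intro a M hM
  classical
  -- pointwise symbol estimates
  have hCp' : ∀ b : ℕ, ∃ C : ℝ, 0 ≤ C ∧ (b ≤ N → ∀ (x ξ : Vec n),
      ‖iteratedFDeriv ℝ b (fun ζ => p x ζ) ξ‖ ≤ C * (1 + ‖ξ‖ ^ 2) ^ ((m - b) / 2)) := by
    intro b
    by_cases hb : b ≤ N
    · obtain ⟨C, hC0, hC⟩ := hp.2 b hb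
      refine ⟨C, hC0, fun _ x ξ => ?_⟩
      have h := (hC ξ).2.1 0 (Nat.zero_le _) x
      simpa [norm_iteratedFDeriv_zero] using h
    · exact ⟨0, le_refl 0, fun h => absurd h hb⟩
  choose Cp hCp0 hCp using hCp'
  choose Cφ hCφ using P.deriv_bound
  have hCφ0 : ∀ k, 0 ≤ Cφ k := by
    intro k
    have h := hCφ k 0 0
    have h1 : ((((2:ℝ) ^ (0:ℕ))⁻¹) ^ k) = 1 := by norm_num
    rw [h1, mul_one] at h
    exact le_trans (norm_nonneg _) h
  -- support of φ j inside ball of radius 2^j * 2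
  have hsupp : ∀ j : ℕ, tsupport (P.φ j) ⊆ Metric.closedBall 0 ((2:ℝ) ^ j * 2) := by
    intro j
    rcases Nat.eq_zero_or_pos j with rfl | hj
    · have h2 : ((2:ℝ) ^ (0:ℕ) * 2) = 2 := by norm_num
      rw [h2]; exact P.supp_zero
    · intro ξ hξ
      have h := (P.supp_succ j hj hξ).2
      rw [Metric.mem_closedBall, dist_zero_right]
      calc ‖ξ‖ ≤ (2:ℝ) ^ (j+1) := h
        _ = (2:ℝ) ^ j * 2 := pow_succ 2 j
  -- Japanese bracket bound on the dyadic support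
  have hD : ∀ (e : ℝ) (j : ℕ) (ξ : Vec n), ξ ∈ tsupport (P.φ j) →
      (1 + ‖ξ‖ ^ 2) ^ (e / 2) ≤ 4 ^ |e| * ((2:ℝ) ^ j) ^ e := by
    intro e j ξ hξ
    have ht0 : (0:ℝ) < (2:ℝ) ^ j := by positivity
    have hlow : (((2:ℝ) ^ j) / 2) ^ 2 ≤ 1 + ‖ξ‖ ^ 2 := by
      rcases Nat.eq_zero_or_pos j with rfl | hj
      · norm_num
        nlinarith [sq_nonneg ‖ξ‖]
      · have h1 : (2:ℝ) ^ (j - 1) ≤ ‖ξ‖ := (P.supp_succ j hj hξ).1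
        have h2 : (2:ℝ) ^ (j-1) = ((2:ℝ) ^ j) / 2 := by
          rw [eq_div_iff (two_ne_zero)]
          rw [← pow_succ, Nat.sub_add_cancel hj]
        nlinarith [norm_nonneg ξ]
    have hhigh : 1 + ‖ξ‖ ^ 2 ≤ (((2:ℝ) ^ j) * 4) ^ 2 := by
      rcases Nat.eq_zero_or_pos j with rfl | hj
      · have hξ2 : ‖ξ‖ ≤ 2 := by
          have h := P.supp_zero hξ
          rwa [Metric.mem_closedBall, dist_zero_right] at h
        norm_num
        nlinarith [norm_nonneg ξ]
      · have h2 : ‖ξ‖ ≤ (2:ℝ) ^ (j+1) := (P.supp_succ j hj hξ).2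
        have h3 : (2:ℝ) ^ (j+1) = ((2:ℝ) ^ j) * 2 := pow_succ 2 j
        have h4 : (1:ℝ) ≤ (2:ℝ) ^ j := one_le_pow₀ (by norm_num)
        nlinarith [norm_nonneg ξ]
    have hs0 : (0:ℝ) < 1 + ‖ξ‖ ^ 2 := by positivity
    rcases le_or_gt 0 e with he | he
    · calc (1 + ‖ξ‖ ^ 2) ^ (e/2) ≤ ((((2:ℝ) ^ j) * 4) ^ 2) ^ (e/2) :=
          Real.rpow_le_rpow hs0.le hhigh (by positivity)
      _ = (((2:ℝ) ^ j) * 4) ^ e := by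
          rw [← Real.rpow_natCast (((2:ℝ) ^ j) * 4) 2, ← Real.rpow_mul (by positivity)]
          congr 1; push_cast; ring
      _ = ((2:ℝ) ^ j) ^ e * 4 ^ e := Real.mul_rpow ht0.le (by norm_num)
      _ ≤ ((2:ℝ) ^ j) ^ e * 4 ^ |e| := by
          have h5 := Real.rpow_le_rpow_of_exponent_le (by norm_num : (1:ℝ) ≤ 4) (le_abs_self e)
          exact mul_le_mul_of_nonneg_left h5 (Real.rpow_nonneg ht0.le e)
      _ = 4 ^ |e| * ((2:ℝ) ^ j) ^ e := mul_comm _ _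
    · calc (1 + ‖ξ‖ ^ 2) ^ (e/2) ≤ ((((2:ℝ) ^ j) / 2) ^ 2) ^ (e/2) :=
          Real.rpow_le_rpow_of_nonpos (by positivity) hlow (by linarith)
      _ = (((2:ℝ) ^ j) / 2) ^ e := by
          rw [← Real.rpow_natCast (((2:ℝ) ^ j) / 2) 2, ← Real.rpow_mul (by positivity)]
          congr 1; push_cast; ring
      _ = ((2:ℝ) ^ j) ^ e * (2:ℝ) ^ (-e) := by
          rw [div_eq_mul_inv, Real.mul_rpow ht0.le (by norm_num),
            Real.inv_rpow (by norm_num), ← Real.rpow_neg (by norm_num)]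
      _ ≤ ((2:ℝ) ^ j) ^ e * 4 ^ |e| := by
          have habs : -e = |e| := (abs_of_neg he).symm
          rw [habs]
          exact mul_le_mul_of_nonneg_left
            (Real.rpow_le_rpow (by norm_num) (by norm_num) (abs_nonneg e))
            (Real.rpow_nonneg ht0.le e)
      _ = 4 ^ |e| * ((2:ℝ) ^ j) ^ e := mul_comm _ _
  -- the localized symbol and its derivative bounds
  set g : ℕ → Vec n → Vec n → (X₀ →L[ℂ] X₁) := fun j x ξ => P.φ j ξ • p x ξ with hgdef
  have hgsmooth : ∀ j x, ContDiff ℝ (N:ℕ) (g j x) := fun j x =>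
    (((P.smooth j).of_le (by exact_mod_cast (le_top : (N:ℕ∞) ≤ ⊤))).smul (hp.1 x))
  have hgzero : ∀ (j:ℕ) (x ξ : Vec n), ξ ∉ tsupport (P.φ j) → ∀ b:ℕ,
      iteratedFDeriv ℝ b (g j x) ξ = 0 := by
    intro j x ξ hξ b
    have h1 : Function.support (g j x) ⊆ tsupport (P.φ j) := by
      intro ζ hζ
      by_contra hmem
      exact hζ (by simp [hgdef, image_eq_zero_of_notMem_tsupport hmem])
    have h2 : tsupport (g j x) ⊆ tsupport (P.φ j) :=
      closure_minimal h1 (isClosed_tsupport _)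
    by_contra hne
    exact hξ (h2 (support_iteratedFDeriv_subset b (Function.mem_support.mpr hne)))
  set Cg : ℕ → ℝ := fun b => ∑ i ∈ Finset.range (b+1),
      (b.choose i : ℝ) * Cφ i * (Cp (b - i) * 4 ^ |m - ((b - i : ℕ) : ℝ)|) with hCgdef
  have hCg0 : ∀ b, 0 ≤ Cg b := fun b => Finset.sum_nonneg (fun i _ =>
    mul_nonneg (mul_nonneg (by positivity) (hCφ0 i))
      (mul_nonneg (hCp0 _) (by positivity)))
  have hKg : ∀ b : ℕ, b ≤ N → ∀ (j:ℕ) (x ξ : Vec n),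
      ‖iteratedFDeriv ℝ b (g j x) ξ‖ ≤ Cg b * ((2:ℝ) ^ j) ^ ((m : ℝ) - b) := by
    intro b hb j x ξ
    by_cases hξ : ξ ∈ tsupport (P.φ j)
    case neg =>
      rw [hgzero j x ξ hξ b, norm_zero]
      exact mul_nonneg (hCg0 b) (Real.rpow_nonneg (by positivity) _)
    case pos =>
    have hsmul : ‖iteratedFDeriv ℝ b (g j x) ξ‖ ≤ ∑ i ∈ Finset.range (b+1),
        (b.choose i : ℝ) * ‖iteratedFDeriv ℝ i (P.φ j) ξ‖ *
          ‖iteratedFDeriv ℝ (b - i) (fun ζ => p x ζ) ξ‖ :=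
      norm_iteratedFDeriv_smul_le
        ((P.smooth j).of_le (by exact_mod_cast (le_top : (N:ℕ∞) ≤ ⊤)))
        (hp.1 x) ξ (by exact_mod_cast hb)
    refine hsmul.trans ?_
    have hterm : ∀ i ∈ Finset.range (b+1),
        (b.choose i : ℝ) * ‖iteratedFDeriv ℝ i (P.φ j) ξ‖ *
          ‖iteratedFDeriv ℝ (b - i) (fun ζ => p x ζ) ξ‖
        ≤ ((b.choose i : ℝ) * Cφ i * (Cp (b - i) * 4 ^ |m - ((b - i : ℕ) : ℝ)|)) *
            ((2:ℝ) ^ j) ^ ((m:ℝ) - b) := by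
      intro i hi
      have hib : i ≤ b := Nat.lt_succ_iff.mp (Finset.mem_range.mp hi)
      have h1 : ‖iteratedFDeriv ℝ i (P.φ j) ξ‖ ≤ Cφ i * (((2:ℝ) ^ j)⁻¹) ^ i := hCφ i j ξ
      have h2 : ‖iteratedFDeriv ℝ (b-i) (fun ζ => p x ζ) ξ‖
          ≤ Cp (b-i) * (1 + ‖ξ‖ ^ 2) ^ ((m - ((b-i:ℕ):ℝ))/2) :=
        hCp (b-i) (le_trans (Nat.sub_le b i) hb) x ξ
      have h3 : (1 + ‖ξ‖ ^ 2 : ℝ) ^ ((m - ((b-i:ℕ):ℝ))/2)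
          ≤ 4 ^ |m - ((b-i:ℕ):ℝ)| * ((2:ℝ) ^ j) ^ (m - ((b-i:ℕ):ℝ)) := hD _ j ξ hξ
      have h2' : ‖iteratedFDeriv ℝ (b-i) (fun ζ => p x ζ) ξ‖
          ≤ Cp (b-i) * (4 ^ |m - ((b-i:ℕ):ℝ)| * ((2:ℝ) ^ j) ^ (m - ((b-i:ℕ):ℝ))) :=
        h2.trans (mul_le_mul_of_nonneg_left h3 (hCp0 _))
      have hcast : ((b - i : ℕ):ℝ) = (b:ℝ) - i := Nat.cast_sub hib
      have e3 : (((2:ℝ) ^ j)⁻¹) ^ i * ((2:ℝ) ^ j) ^ (m - ((b-i:ℕ):ℝ))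
          = ((2:ℝ) ^ j) ^ ((m:ℝ) - b) := by
        rw [hcast, inv_pow, ← Real.rpow_natCast ((2:ℝ) ^ j) i,
          ← Real.rpow_neg (by positivity), ← Real.rpow_add (by positivity)]
        congr 1; ring
      calc (b.choose i : ℝ) * ‖iteratedFDeriv ℝ i (P.φ j) ξ‖ *
            ‖iteratedFDeriv ℝ (b - i) (fun ζ => p x ζ) ξ‖
          ≤ (b.choose i : ℝ) * (Cφ i * (((2:ℝ) ^ j)⁻¹) ^ i) *
            (Cp (b-i) * (4 ^ |m - ((b-i:ℕ):ℝ)| * ((2:ℝ) ^ j) ^ (m - ((b-i:ℕ):ℝ)))) := by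
            have hnn1 : (0:ℝ) ≤ (b.choose i : ℝ) := by positivity
            have hnn2 : (0:ℝ) ≤ (b.choose i : ℝ) * (Cφ i * (((2:ℝ) ^ j)⁻¹) ^ i) :=
              mul_nonneg hnn1 (mul_nonneg (hCφ0 i) (by positivity))
            exact mul_le_mul (mul_le_mul_of_nonneg_left h1 hnn1) h2' (norm_nonneg _) hnn2
        _ = ((b.choose i : ℝ) * Cφ i * (Cp (b - i) * 4 ^ |m - ((b - i : ℕ) : ℝ)|)) *
              ((((2:ℝ) ^ j)⁻¹) ^ i * ((2:ℝ) ^ j) ^ (m - ((b-i:ℕ):ℝ))) := by ring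
        _ = ((b.choose i : ℝ) * Cφ i * (Cp (b - i) * 4 ^ |m - ((b - i : ℕ) : ℝ)|)) *
              ((2:ℝ) ^ j) ^ ((m:ℝ) - b) := by rw [e3]
    calc (∑ i ∈ Finset.range (b+1), (b.choose i : ℝ) * ‖iteratedFDeriv ℝ i (P.φ j) ξ‖ *
            ‖iteratedFDeriv ℝ (b - i) (fun ζ => p x ζ) ξ‖)
        ≤ ∑ i ∈ Finset.range (b+1),
            ((b.choose i : ℝ) * Cφ i * (Cp (b - i) * 4 ^ |m - ((b - i : ℕ) : ℝ)|)) *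
              ((2:ℝ) ^ j) ^ ((m:ℝ) - b) := Finset.sum_le_sum hterm
      _ = Cg b * ((2:ℝ) ^ j) ^ ((m:ℝ) - b) := by
          rw [hCgdef, ← Finset.sum_mul]
  -- global constants
  set Vol : ℝ := (volume (Metric.closedBall (0 : Vec n) 1)).toReal with hVoldef
  have hVol0 : 0 ≤ Vol := ENNReal.toReal_nonneg
  set DD : ℝ := ∑ i ∈ Finset.range (M+1), Cg i * (2*Real.pi) ^ i with hDDdef
  have hDD0 : 0 ≤ DD := Finset.sum_nonneg fun i _ => mul_nonneg (hCg0 i) (by positivity)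
  refine ⟨(2*Real.pi) ^ a * (2*(a:ℝ)+2) ^ M * (((a+1)*(M+1):ℕ):ℝ) * (Vol * DD), ?_, ?_⟩
  · have : (0:ℝ) ≤ Vol * DD := mul_nonneg hVol0 hDD0
    positivity
  intro j x z hz
  have hA : (0:ℝ) < (2:ℝ) ^ j := by positivity
  have hcneg : (-(2 * Real.pi * ((2:ℝ) ^ j))) < 0 := by
    have := Real.pi_pos; nlinarith
  set F : Vec n → (X₀ →L[ℂ] X₁) :=
    fun η => g j x ((-(2 * Real.pi * ((2:ℝ) ^ j))) • η) with hFdef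
  have hFsmooth : ContDiff ℝ (N:ℕ) F :=
    (hgsmooth j x).comp (contDiff_id.const_smul _)
  have hFder : ∀ i : ℕ, i ≤ N → ∀ η : Vec n,
      ‖iteratedFDeriv ℝ i F η‖ ≤ (Cg i * (2*Real.pi) ^ i) * ((2:ℝ) ^ j) ^ (m:ℝ) := by
    intro i hi η
    have h1 := norm_iteratedFDeriv_comp_smul_le (ν := (N:ℕ∞))
      (by exact hgsmooth j x) (-(2 * Real.pi * ((2:ℝ) ^ j)))
      (by exact_mod_cast hi) η
    have h2 := hKg i hi j x ((-(2 * Real.pi * ((2:ℝ) ^ j))) • η)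
    have hc' : |(-(2 * Real.pi * ((2:ℝ) ^ j)))| = 2 * Real.pi * ((2:ℝ) ^ j) := by
      rw [abs_of_neg hcneg]; ring
    have hAi : ((2:ℝ) ^ j) ^ i * ((2:ℝ) ^ j) ^ ((m:ℝ) - i) = ((2:ℝ) ^ j) ^ (m:ℝ) := by
      rw [← Real.rpow_natCast ((2:ℝ) ^ j) i, ← Real.rpow_add hA]
      congr 1; ring
    calc ‖iteratedFDeriv ℝ i F η‖
        ≤ |(-(2 * Real.pi * ((2:ℝ) ^ j)))| ^ i *
          ‖iteratedFDeriv ℝ i (g j x) ((-(2 * Real.pi * ((2:ℝ) ^ j))) • η)‖ := h1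
      _ ≤ |(-(2 * Real.pi * ((2:ℝ) ^ j)))| ^ i * (Cg i * ((2:ℝ) ^ j) ^ ((m:ℝ) - i)) :=
          mul_le_mul_of_nonneg_left h2 (by positivity)
      _ = (Cg i * (2*Real.pi) ^ i) * (((2:ℝ) ^ j) ^ i * ((2:ℝ) ^ j) ^ ((m:ℝ) - i)) := by
          rw [hc', mul_pow]; ring
      _ = (Cg i * (2*Real.pi) ^ i) * ((2:ℝ) ^ j) ^ (m:ℝ) := by rw [hAi]
  have hFsupp0 : ∀ η : Vec n, η ∉ Metric.closedBall (0 : Vec n) 1 → F η = 0 := by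
    intro η hη
    have hη1 : 1 < ‖η‖ := by
      by_contra hle
      exact hη (by rw [Metric.mem_closedBall, dist_zero_right]; linarith)
    have hout : (-(2 * Real.pi * ((2:ℝ) ^ j))) • η ∉ tsupport (P.φ j) := by
      intro hmem
      have h := hsupp j hmem
      rw [Metric.mem_closedBall, dist_zero_right] at h
      rw [norm_smul, Real.norm_eq_abs, abs_of_neg hcneg] at h
      have hπ3 := Real.pi_gt_three
      nlinarith
    have hphi0 : P.φ j ((-(2 * Real.pi * ((2:ℝ) ^ j))) • η) = 0 :=
      image_eq_zero_of_notMem_tsupport hout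
    show g j x ((-(2 * Real.pi * ((2:ℝ) ^ j))) • η) = 0
    rw [hgdef]
    simp only []
    rw [hphi0, zero_smul]
  have hFcs : HasCompactSupport F :=
    HasCompactSupport.intro (isCompact_closedBall _ _) hFsupp0
  have hFts : tsupport F ⊆ Metric.closedBall (0 : Vec n) 1 :=
    closure_minimal (fun w hw => by
      by_contra hmem
      exact hw (hFsupp0 w hmem)) Metric.isClosed_closedBall
  have hInt : ∀ (k i : ℕ), i ≤ N →
      Integrable (fun v : Vec n => ‖v‖ ^ k * ‖iteratedFDeriv ℝ i F v‖) := by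
    intro k i hi
    have hcont : Continuous fun v : Vec n => ‖v‖ ^ k * ‖iteratedFDeriv ℝ i F v‖ :=
      ((continuous_norm.pow k)).mul
        ((hFsmooth.continuous_iteratedFDeriv (by exact_mod_cast hi)).norm)
    have hcs : HasCompactSupport fun v : Vec n => ‖v‖ ^ k * ‖iteratedFDeriv ℝ i F v‖ := by
      apply HasCompactSupport.mul_left
      exact (hFcs.iteratedFDeriv i).norm
    exact hcont.integrable_of_hasCompactSupport hcs
  have hIntBd : ∀ (k i : ℕ), i ≤ M →
      (∫ v : Vec n, ‖v‖ ^ k * ‖iteratedFDeriv ℝ i F v‖) ≤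
        Vol * (DD * ((2:ℝ) ^ j) ^ (m:ℝ)) := by
    intro k i hi
    have hpt : ∀ v : Vec n, ‖v‖ ^ k * ‖iteratedFDeriv ℝ i F v‖ ≤
        Set.indicator (Metric.closedBall (0 : Vec n) 1)
          (fun _ => DD * ((2:ℝ) ^ j) ^ (m:ℝ)) v := by
      intro v
      by_cases hv : v ∈ Metric.closedBall (0 : Vec n) 1
      · rw [Set.indicator_of_mem hv]
        have hv1 : ‖v‖ ≤ 1 := by rwa [Metric.mem_closedBall, dist_zero_right] at hv
        have h1 : ‖v‖ ^ k ≤ 1 := pow_le_one₀ (norm_nonneg v) hv1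
        have h2 : ‖iteratedFDeriv ℝ i F v‖ ≤ (Cg i * (2*Real.pi) ^ i) * ((2:ℝ) ^ j) ^ (m:ℝ) :=
          hFder i (le_trans hi hM) v
        have h3 : (Cg i * (2*Real.pi) ^ i) ≤ DD := by
          rw [hDDdef]
          exact Finset.single_le_sum (f := fun i => Cg i * (2*Real.pi) ^ i)
            (fun i _ => mul_nonneg (hCg0 i) (by positivity))
            (Finset.mem_range.mpr (Nat.lt_succ_of_le hi))
        calc ‖v‖ ^ k * ‖iteratedFDeriv ℝ i F v‖
            ≤ 1 * ((Cg i * (2*Real.pi) ^ i) * ((2:ℝ) ^ j) ^ (m:ℝ)) :=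
              mul_le_mul h1 h2 (norm_nonneg _) zero_le_one
          _ ≤ DD * ((2:ℝ) ^ j) ^ (m:ℝ) := by
              rw [one_mul]
              exact mul_le_mul_of_nonneg_right h3 (Real.rpow_nonneg hA.le m)
      · rw [Set.indicator_of_notMem hv]
        have hzero : iteratedFDeriv ℝ i F v = 0 := by
          by_contra hne
          exact hv (hFts (support_iteratedFDeriv_subset i (Function.mem_support.mpr hne)))
        rw [hzero, norm_zero, mul_zero]
    have hindint : Integrable (Set.indicator (Metric.closedBall (0 : Vec n) 1)
        (fun _ => DD * ((2:ℝ) ^ j) ^ (m:ℝ))) :=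
      by
        rw [MeasureTheory.integrable_indicator_iff measurableSet_closedBall]
        exact MeasureTheory.integrableOn_const
          (MeasureTheory.measure_closedBall_lt_top).ne
    calc (∫ v : Vec n, ‖v‖ ^ k * ‖iteratedFDeriv ℝ i F v‖)
        ≤ ∫ v : Vec n, Set.indicator (Metric.closedBall (0 : Vec n) 1)
            (fun _ => DD * ((2:ℝ) ^ j) ^ (m:ℝ)) v :=
          integral_mono (hInt k i (le_trans hi hM)) hindint hpt
      _ = Vol * (DD * ((2:ℝ) ^ j) ^ (m:ℝ)) := by
          rw [MeasureTheory.integral_indicator_const _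
            measurableSet_closedBall, hVoldef, smul_eq_mul]; rfl
  have hmain : ∀ w : Vec n, ‖w‖ ^ M * ‖iteratedFDeriv ℝ a (FourierTransform.fourier F) w‖ ≤
      ((2*Real.pi) ^ a * (2*(a:ℝ)+2) ^ M * (((a+1)*(M+1):ℕ):ℝ) * (Vol * DD)) *
        ((2:ℝ) ^ j) ^ (m:ℝ) := by
    intro w
    have happ := Real.pow_mul_norm_iteratedFDeriv_fourier_le
      (K := (a:ℕ∞)) (N := (N:ℕ∞)) (f := F)
      (by exact hFsmooth)
      (fun k i hk hi => hInt k i (by exact_mod_cast hi))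
      (le_refl _) (by exact_mod_cast hM) w
    refine happ.trans ?_
    have hcard : (Finset.range (a+1) ×ˢ Finset.range (M+1)).card = (a+1)*(M+1) := by
      rw [Finset.card_product, Finset.card_range, Finset.card_range]
    have hsum : (∑ q ∈ Finset.range (a+1) ×ˢ Finset.range (M+1),
        ∫ v : Vec n, ‖v‖ ^ q.1 * ‖iteratedFDeriv ℝ q.2 F v‖) ≤
        (((a+1)*(M+1):ℕ):ℝ) * (Vol * (DD * ((2:ℝ) ^ j) ^ (m:ℝ))) := by
      have hb := Finset.sum_le_card_nsmul (Finset.range (a+1) ×ˢ Finset.range (M+1))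
        (fun q => ∫ v : Vec n, ‖v‖ ^ q.1 * ‖iteratedFDeriv ℝ q.2 F v‖)
        (Vol * (DD * ((2:ℝ) ^ j) ^ (m:ℝ)))
        (fun q hq => hIntBd q.1 q.2
          (Nat.lt_succ_iff.mp (Finset.mem_range.mp (Finset.mem_product.mp hq).2)))
      rw [hcard] at hb
      simpa [nsmul_eq_mul] using hb
    calc (2*Real.pi) ^ a * (2*(a:ℝ)+2) ^ M *
          ∑ q ∈ Finset.range (a+1) ×ˢ Finset.range (M+1),
            ∫ v : Vec n, ‖v‖ ^ q.1 * ‖iteratedFDeriv ℝ q.2 F v‖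
        ≤ (2*Real.pi) ^ a * (2*(a:ℝ)+2) ^ M *
          ((((a+1)*(M+1):ℕ):ℝ) * (Vol * (DD * ((2:ℝ) ^ j) ^ (m:ℝ)))) :=
          mul_le_mul_of_nonneg_left hsum (by positivity)
      _ = ((2*Real.pi) ^ a * (2*(a:ℝ)+2) ^ M * (((a+1)*(M+1):ℕ):ℝ) * (Vol * DD)) *
            ((2:ℝ) ^ j) ^ (m:ℝ) := by ring
  -- rewrite the kernel through the rescaled Fourier integral
  have hid : (fun w : Vec n => vFourierInv (fun ξ => ((P.φ j ξ : ℝ) : ℂ) • p x ξ) w)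
      = fun w : Vec n => (((2:ℝ) ^ j) ^ n : ℝ) •
          FourierTransform.fourier F (((2:ℝ) ^ j) • w) := by
    funext w
    have h1 : (fun ξ => ((P.φ j ξ : ℝ) : ℂ) • p x ξ) = g j x := by
      funext ξ
      rw [hgdef]
      exact Complex.coe_smul _ _
    rw [h1, vFourierInv_eq_fourierIntegral (g j x) ((2:ℝ) ^ j) hA w]
  rw [hid]
  have hΦsmooth : ContDiff ℝ ((a:ℕ∞)) (FourierTransform.fourier F) := by
    apply Real.contDiff_fourier
    intro k _
    have h := hInt k 0 (Nat.zero_le N)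
    simpa [norm_iteratedFDeriv_zero] using h
  have hcomp : ContDiff ℝ ((a:ℕ∞)) fun w : Vec n =>
      FourierTransform.fourier F (((2:ℝ) ^ j) • w) :=
    hΦsmooth.comp (contDiff_id.const_smul _)
  have hstep1pre : iteratedFDeriv ℝ a ((((2:ℝ) ^ j) ^ n : ℝ) •
        (fun w : Vec n => FourierTransform.fourier F (((2:ℝ) ^ j) • w))) z
      = (((2:ℝ) ^ j) ^ n : ℝ) • iteratedFDeriv ℝ a
          (fun w : Vec n => FourierTransform.fourier F (((2:ℝ) ^ j) • w)) z :=
    iteratedFDeriv_const_smul_apply (by exact hcomp.contDiffAt)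
  have hstep1 : iteratedFDeriv ℝ a (fun w : Vec n =>
        (((2:ℝ) ^ j) ^ n : ℝ) • FourierTransform.fourier F (((2:ℝ) ^ j) • w)) z
      = (((2:ℝ) ^ j) ^ n : ℝ) • iteratedFDeriv ℝ a
          (fun w : Vec n => FourierTransform.fourier F (((2:ℝ) ^ j) • w)) z := by
    rw [show (fun w : Vec n => (((2:ℝ) ^ j) ^ n : ℝ) • FourierTransform.fourier F (((2:ℝ) ^ j) • w))
        = (((2:ℝ) ^ j) ^ n : ℝ) • (fun w : Vec n => FourierTransform.fourier F (((2:ℝ) ^ j) • w))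
      from rfl]
    exact hstep1pre
  have hstep2 : ‖iteratedFDeriv ℝ a
        (fun w : Vec n => FourierTransform.fourier F (((2:ℝ) ^ j) • w)) z‖ ≤
      ((2:ℝ) ^ j) ^ a * ‖iteratedFDeriv ℝ a (FourierTransform.fourier F) (((2:ℝ) ^ j) • z)‖ := by
    have h := norm_iteratedFDeriv_comp_smul_le (ν := (a:ℕ∞)) hΦsmooth ((2:ℝ) ^ j)
      (le_refl _) z
    simpa [abs_of_pos hA] using h
  have hz0 : 0 < ‖z‖ := norm_pos_iff.mpr hz
  have hAz : ‖((2:ℝ) ^ j) • z‖ = ((2:ℝ) ^ j) * ‖z‖ := by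
    rw [norm_smul, Real.norm_eq_abs, abs_of_pos hA]
  set C2 : ℝ := (2*Real.pi) ^ a * (2*(a:ℝ)+2) ^ M * (((a+1)*(M+1):ℕ):ℝ) * (Vol * DD)
    with hC2def
  have hC20 : 0 ≤ C2 := by
    have h0 : (0:ℝ) ≤ Vol * DD := mul_nonneg hVol0 hDD0
    rw [hC2def]; positivity
  have hstep3 : ‖iteratedFDeriv ℝ a (FourierTransform.fourier F) (((2:ℝ) ^ j) • z)‖ ≤
      (C2 * ((2:ℝ) ^ j) ^ (m:ℝ)) / ((((2:ℝ) ^ j) * ‖z‖) ^ M) := by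
    have h := hmain (((2:ℝ) ^ j) • z)
    rw [hAz] at h
    rw [le_div_iff₀ (by positivity)]
    calc ‖iteratedFDeriv ℝ a (FourierTransform.fourier F) (((2:ℝ) ^ j) • z)‖ *
          (((2:ℝ) ^ j) * ‖z‖) ^ M
        = (((2:ℝ) ^ j) * ‖z‖) ^ M *
          ‖iteratedFDeriv ℝ a (FourierTransform.fourier F) (((2:ℝ) ^ j) • z)‖ := by ring
      _ ≤ C2 * ((2:ℝ) ^ j) ^ (m:ℝ) := h
  have hpow : ((2:ℝ) ^ j) ^ n * (((2:ℝ) ^ j) ^ a *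
        ((C2 * ((2:ℝ) ^ j) ^ (m:ℝ)) / ((((2:ℝ) ^ j) * ‖z‖) ^ M)))
      = C2 * ‖z‖ ^ (-(M:ℝ)) * (2:ℝ) ^ ((j:ℝ) * ((n:ℝ) + m + (a:ℝ) - (M:ℝ))) := by
    have hzM : (0:ℝ) < ‖z‖ ^ M := by positivity
    have hAM : (0:ℝ) < ((2:ℝ) ^ j) ^ M := by positivity
    have e1 : ‖z‖ ^ (-(M:ℝ)) = (‖z‖ ^ M)⁻¹ := by
      rw [Real.rpow_neg (norm_nonneg z), Real.rpow_natCast]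
    have e2 : (2:ℝ) ^ ((j:ℝ) * ((n:ℝ) + m + (a:ℝ) - (M:ℝ)))
        = ((2:ℝ) ^ j) ^ ((n:ℝ) + m + (a:ℝ) - (M:ℝ)) := by
      rw [Real.rpow_mul (by norm_num : (0:ℝ) ≤ 2), Real.rpow_natCast]
    have e3 : ((2:ℝ) ^ j) ^ ((n:ℝ) + m + (a:ℝ) - (M:ℝ))
        = ((2:ℝ) ^ j) ^ n * ((2:ℝ) ^ j) ^ a * ((2:ℝ) ^ j) ^ (m:ℝ) / ((2:ℝ) ^ j) ^ M := by
      rw [show (n:ℝ) + m + (a:ℝ) - (M:ℝ) = (n:ℝ) + ((a:ℝ) + (m + -(M:ℝ))) by ring,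
        Real.rpow_add hA, Real.rpow_add hA, Real.rpow_add hA, Real.rpow_neg hA.le,
        Real.rpow_natCast, Real.rpow_natCast, Real.rpow_natCast]
      field_simp
    rw [e1, e2, e3, mul_pow]
    field_simp
  calc ‖iteratedFDeriv ℝ a (fun w : Vec n =>
        (((2:ℝ) ^ j) ^ n : ℝ) • FourierTransform.fourier F (((2:ℝ) ^ j) • w)) z‖
      = ((2:ℝ) ^ j) ^ n * ‖iteratedFDeriv ℝ a
          (fun w : Vec n => FourierTransform.fourier F (((2:ℝ) ^ j) • w)) z‖ := by
        rw [hstep1, norm_smul, Real.norm_eq_abs, abs_of_pos (pow_pos hA n)]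
    _ ≤ ((2:ℝ) ^ j) ^ n * (((2:ℝ) ^ j) ^ a *
          ((C2 * ((2:ℝ) ^ j) ^ (m:ℝ)) / ((((2:ℝ) ^ j) * ‖z‖) ^ M))) := by
        refine mul_le_mul_of_nonneg_left ?_ (by positivity)
        exact hstep2.trans (mul_le_mul_of_nonneg_left hstep3 (by positivity))
    _ = C2 * ‖z‖ ^ (-(M:ℝ)) * (2:ℝ) ^ ((j:ℝ) * ((n:ℝ) + m + (a:ℝ) - (M:ℝ))) := hpow
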